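/- Consider the iteration r⁰ = C, r^{k+1} = C + Σ_{h ∈ H} ⌈r^k/T_h⌉ · C_h where C, C_h, T_h > 0. The sequence (r^k) is monotonically non-decreasing, and if Σ_{h} C_h/T_h < 1 then the sequence is bounded and converges to the least fixed point of the map r ↦ C + Σ_h ⌈r/T_h⌉·C_h. -/

import Mathlib

open Finset

/-- The response-time iteration `r⁰ = C`, `r^{k+1} = C + Σ_h ⌈r^k/T_h⌉·C_h` is
monotonically non-decreasing, and if `Σ_h C_h/T_h < 1` it is bounded and converges
to the least fixed point of `r ↦ C + Σ_h ⌈r/T_h⌉·C_h`. -/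
theorem response_time_iteration (k : ℕ) (C : ℝ) (Ch Th : Fin k → ℝ)
    (hC : 0 < C) (hCh : ∀ h, 0 < Ch h) (hTh : ∀ h, 0 < Th h)
    (r : ℕ → ℝ) (hr0 : r 0 = C)
    (hrs : ∀ j : ℕ, r (j + 1) = C + ∑ h, (⌈r j / Th h⌉ : ℝ) * Ch h) :
    Monotone r ∧
    ((∑ h, Ch h / Th h) < 1 →
      (∃ B : ℝ, ∀ j, r j ≤ B) ∧
      ∃ rstar : ℝ, Filter.Tendsto r Filter.atTop (nhds rstar) ∧
        rstar = C + ∑ h, (⌈rstar / Th h⌉ : ℝ) * Ch h ∧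
        ∀ s : ℝ, s = C + ∑ h, (⌈s / Th h⌉ : ℝ) * Ch h → rstar ≤ s) := by
  have hfmono : ∀ a b : ℝ, a ≤ b →
      C + ∑ h, (⌈a / Th h⌉ : ℝ) * Ch h ≤ C + ∑ h, (⌈b / Th h⌉ : ℝ) * Ch h := by
    intro a b hab
    apply add_le_add_right
    apply Finset.sum_le_sum
    intro h _
    have hcc : (⌈a / Th h⌉ : ℤ) ≤ ⌈b / Th h⌉ :=
      Int.ceil_le_ceil ((div_le_div_iff_of_pos_right (hTh h)).mpr hab)
    exact mul_le_mul_of_nonneg_right (by exact_mod_cast hcc) (hCh h).le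
  have hmono : Monotone r := by
    apply monotone_nat_of_le_succ
    intro j
    induction j with
    | zero =>
      rw [hrs 0, hr0]
      have hnn : (0:ℝ) ≤ ∑ h, (⌈C / Th h⌉ : ℝ) * Ch h :=
        Finset.sum_nonneg fun h _ => mul_nonneg
          (by exact_mod_cast Int.ceil_nonneg (div_nonneg hC.le (hTh h).le)) (hCh h).le
      linarith
    | succ n ih =>
      rw [hrs n, hrs (n+1)]
      exact hfmono _ _ ih
  refine ⟨hmono, ?_⟩
  intro hU
  set U := ∑ h, Ch h / Th h with hUdef
  have hU0 : 0 ≤ U := Finset.sum_nonneg fun h _ => div_nonneg (hCh h).le (hTh h).le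
  have h1U : 0 < 1 - U := by linarith
  set S := ∑ h, Ch h with hSdef
  have hS0 : 0 ≤ S := Finset.sum_nonneg fun h _ => (hCh h).le
  set B := (C + S) / (1 - U) with hBdef
  have hBeq : B * (1 - U) = C + S := div_mul_cancel₀ _ h1U.ne'
  have hB0 : 0 ≤ B := div_nonneg (by linarith) h1U.le
  have hsum : ∀ x : ℝ, ∑ h, (x / Th h + 1) * Ch h = x * U + S := by
    intro x
    rw [hUdef, Finset.mul_sum, hSdef, ← Finset.sum_add_distrib]
    exact Finset.sum_congr rfl fun h _ => by ring
  have hbd : ∀ j, r j ≤ B := by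
    intro j
    induction j with
    | zero =>
      rw [hr0]
      nlinarith [mul_nonneg hB0 hU0]
    | succ n ih =>
      rw [hrs n]
      have step1 : ∑ h, (⌈r n / Th h⌉ : ℝ) * Ch h ≤ ∑ h, (r n / Th h + 1) * Ch h := by
        apply Finset.sum_le_sum
        intro h _
        exact mul_le_mul_of_nonneg_right (Int.ceil_lt_add_one _).le (hCh h).le
      have step2 := hsum (r n)
      have step3 : r n * U ≤ B * U := mul_le_mul_of_nonneg_right ih hU0
      nlinarith
  have hbdd : BddAbove (Set.range r) := ⟨B, by rintro _ ⟨j, rfl⟩; exact hbd j⟩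
  set rstar := ⨆ j, r j with hrstar
  have htend : Filter.Tendsto r Filter.atTop (nhds rstar) := tendsto_atTop_ciSup hmono hbdd
  have hle_star : ∀ j, r j ≤ rstar := fun j => le_ciSup hbdd j
  -- eventually the ceilings stabilize
  have hev : ∀ᶠ j in Filter.atTop, ∀ h : Fin k, (⌈r j / Th h⌉ : ℤ) = ⌈rstar / Th h⌉ := by
    rw [Filter.eventually_all]
    intro h
    have h1 : ((⌈rstar / Th h⌉ : ℝ) - 1) < rstar / Th h := by
      have := Int.ceil_lt_add_one (rstar / Th h)
      linarith
    have hlt : ((⌈rstar / Th h⌉ : ℝ) - 1) * Th h < rstar := by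
      rw [← lt_div_iff₀ (hTh h)] at *
      exact h1
    filter_upwards [htend.eventually (eventually_gt_nhds hlt)] with j hj
    have hup : r j / Th h ≤ (⌈rstar / Th h⌉ : ℝ) :=
      le_trans ((div_le_div_iff_of_pos_right (hTh h)).mpr (hle_star j)) (Int.le_ceil _)
    have hlow : (⌈rstar / Th h⌉ : ℝ) - 1 < r j / Th h := by
      rw [lt_div_iff₀ (hTh h)]
      exact hj
    exact Int.ceil_eq_iff.mpr ⟨by push_cast; exact hlow, by push_cast; exact hup⟩
  have htend2 : Filter.Tendsto (fun j => r (j + 1)) Filter.atTop (nhds rstar) :=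
    htend.comp (Filter.tendsto_add_atTop_nat 1)
  have heq : ∀ᶠ j in Filter.atTop,
      (fun _ : ℕ => C + ∑ h, (⌈rstar / Th h⌉ : ℝ) * Ch h) j = (fun j => r (j + 1)) j := by
    filter_upwards [hev] with j hj
    rw [hrs j]
    congr 1
    exact Finset.sum_congr rfl fun h _ => by rw [hj h]
  have htend3 : Filter.Tendsto (fun j : ℕ => r (j + 1)) Filter.atTop
      (nhds (C + ∑ h, (⌈rstar / Th h⌉ : ℝ) * Ch h)) :=
    Filter.Tendsto.congr' heq tendsto_const_nhds
  have hfix : rstar = C + ∑ h, (⌈rstar / Th h⌉ : ℝ) * Ch h :=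
    tendsto_nhds_unique htend2 htend3
  refine ⟨⟨B, hbd⟩, rstar, htend, hfix, ?_⟩
  intro s hs
  have hlb : ∑ h, (s / Th h) * Ch h ≤ ∑ h, (⌈s / Th h⌉ : ℝ) * Ch h :=
    Finset.sum_le_sum fun h _ => mul_le_mul_of_nonneg_right (Int.le_ceil _) (hCh h).le
  have hsum2 : ∑ h, (s / Th h) * Ch h = s * U := by
    rw [hUdef, Finset.mul_sum]
    exact Finset.sum_congr rfl fun h _ => by ring
  have hsU : C + s * U ≤ s := by
    rw [← hsum2]
    linarith [hs ▸ hlb]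
  have hs0 : 0 ≤ s := by
    by_contra hneg
    push_neg at hneg
    have : s * 1 ≤ s * U := mul_le_mul_of_nonpos_left (by linarith) hneg.le
    linarith
  have hCs : C ≤ s := by nlinarith [mul_nonneg hs0 hU0]
  have hjs : ∀ j, r j ≤ s := by
    intro j
    induction j with
    | zero => rw [hr0]; exact hCs
    | succ n ih =>
      rw [hrs n, hs]
      exact hfmono _ _ ih
  exact ciSup_le hjs
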